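/- Let σ : A → A^+ be an aperiodic substitution with |σ^n(a)| → ∞ as n → ∞ for every a ∈ A. Then ⋂_{n≥0} σ^n(X_σ) = {w(s̄) : s̄ ∈ Λ}. -/

import Mathlib

open Filter Topology

namespace PaperStmt

variable {A : Type*} {B : Type*}

/-- Apply a substitution (letter-to-word map) to a word, by concatenation. -/
def substWord (σ : B → List A) (w : List B) : List A := w.flatMap σ

/-- `σ^n` applied to a word. -/
def substIter (σ : A → List A) (n : ℕ) (w : List A) : List A := (substWord σ)^[n] w

/-- `σ^n(a)` for a letter `a`. -/
def substPow (σ : A → List A) (n : ℕ) (a : A) : List A := substIter σ n [a]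

/-- The language of a substitution: factors of some `σ^n(a)`, `n ≥ 1`. -/
def Lang (σ : A → List A) : Set (List A) :=
  {w | ∃ a : A, ∃ n : ℕ, 1 ≤ n ∧ w <:+: substIter σ n [a]}

/-- The word `x[i], x[i+1], …, x[i+len-1]` read in a bi-infinite sequence. -/
def seg (x : ℤ → A) (i : ℤ) (len : ℕ) : List A :=
  (List.range len).map fun k => x (i + k)

/-- The phase space `X_σ` of the substitutional dynamical system. -/
def Xsub (σ : A → List A) : Set (ℤ → A) :=
  {x | ∀ n : ℕ, seg x (-(n : ℤ)) (2 * n + 1) ∈ Lang σ}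

/-- `L(X_σ)`: all finite words occurring in elements of `X_σ`. -/
def LangX (σ : A → List A) : Set (List A) :=
  {w | ∃ x ∈ Xsub σ, ∃ i : ℤ, seg x i w.length = w}

/-- The left shift `T`. -/
def shift (x : ℤ → A) : ℤ → A := fun k => x (k + 1)

/-- The power `T^i` of the left shift, `i ∈ ℤ`. -/
def shiftZ (i : ℤ) (x : ℤ → A) : ℤ → A := fun k => x (k + i)

/-- `(X_σ, T_σ)` has no periodic points. -/
def Aperiodic (σ : A → List A) : Prop :=
  ∀ x ∈ Xsub σ, ∀ p : ℕ, 0 < p → shiftZ (p : ℤ) x ≠ x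

/-- The coordinate at which the `n`-th block of the bi-infinite concatenation
`⋯ σ(x_{-1}).σ(x_0) σ(x_1) ⋯` starts (block `0` starts at coordinate `0`). -/
def blockStart (σ : B → List A) (x : ℤ → B) (n : ℤ) : ℤ :=
  if 0 ≤ n then ∑ j ∈ Finset.range n.toNat, ((σ (x (j : ℤ))).length : ℤ)
  else -∑ j ∈ Finset.range (-n).toNat, ((σ (x (-(j : ℤ) - 1))).length : ℤ)

/-- `y` is the image of the bi-infinite sequence `x` under the substitution `σ`,
i.e. `y = ⋯ σ(x_{-1}).σ(x_0)σ(x_1)⋯` with `σ(x_0)` starting at coordinate `0`. -/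
def IsSubstImage (σ : B → List A) (x : ℤ → B) (y : ℤ → A) : Prop :=
  ∀ n : ℤ, seg y (blockStart σ x n) (σ (x n)).length = σ (x n)

/-- `A_l`: the letters `a` with `|σ^n(a)| → ∞`. -/
def longLetters (σ : A → List A) : Set A :=
  {a | Tendsto (fun n => (substPow σ n a).length) atTop atTop}

/-- A minimal component of `(X_σ, T_σ)`: a nonempty closed shift-invariant subset of `X_σ`
that is minimal with respect to inclusion. -/
def MinimalComponent [TopologicalSpace A] (σ : A → List A) (Z : Set (ℤ → A)) : Prop :=
  Z.Nonempty ∧ IsClosed Z ∧ Z ⊆ Xsub σ ∧ shift '' Z = Z ∧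
    ∀ Z' : Set (ℤ → A), Z'.Nonempty → IsClosed Z' → Z' ⊆ Z → shift '' Z' = Z' → Z' = Z

/-- The element `T_σ^i σ^n([a])` of the Kakutani–Rokhlin partition `P_n`. -/
def piece (σ : A → List A) (n : ℕ) (a : A) (i : ℕ) : Set (ℤ → A) :=
  {x | ∃ y z : ℤ → A, y ∈ Xsub σ ∧ y 0 = a ∧
    IsSubstImage (substPow σ n) y z ∧ x = shiftZ (i : ℤ) z}

/-- An `m`-primitive substitution, with respect to a decomposition
`A = P 0 ⊔ … ⊔ P (m-1) ⊔ A0`. -/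
def IsMPrimitive (σ : A → List A) (m : ℕ) (P : Fin m → Set A) (A0 : Set A) : Prop :=
  (∀ i j : Fin m, i ≠ j → Disjoint (P i) (P j)) ∧
  (∀ i, Disjoint (P i) A0) ∧
  ((⋃ i, P i) ∪ A0 = Set.univ) ∧
  (∀ i, ∃ a ∈ P i, ∃ b ∈ P i, a ≠ b) ∧
  (∀ i, ∀ a ∈ P i, ∀ b ∈ σ a, b ∈ P i) ∧
  (∀ i, ∀ a ∈ P i, ∀ b ∈ P i, ∃ n : ℕ, 1 ≤ n ∧ b ∈ substPow σ n a) ∧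
  (∀ a : A, ∃ n : ℕ, 0 < n ∧ ∃ i, ∃ b ∈ P i, b ∈ substPow σ n a) ∧
  (∀ k : ℕ, 1 ≤ k → Lang (substPow σ k) = Lang σ) ∧
  (∀ a : A, [a] ∈ LangX σ)

/-- The set `Z_i` attached to the part `A_i = P i` of an `m`-primitive substitution. -/
def Zset (σ : A → List A) {m : ℕ} (P : Fin m → Set A) (i : Fin m) : Set (ℤ → A) :=
  {x | x ∈ Xsub σ ∧ ∀ n : ℕ, ∃ k : ℕ, 1 ≤ k ∧ ∃ a ∈ P i,
    seg x (-(n : ℤ)) (2 * n + 1) <:+: substPow σ k a}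

/-- The clopen set `W = ∪_i [r_i.l_i]` built from fixed points `w i`. -/
def Wset (σ : A → List A) {m : ℕ} (w : Fin m → ℤ → A) : Set (ℤ → A) :=
  ⋃ i : Fin m, {x | x ∈ Xsub σ ∧ x (-1) = w i (-1) ∧ x 0 = w i 0}

/-- A return word, given the letters `r i = w_i[-1]` and `l i = w_i[0]`. -/
def IsReturnWord (σ : A → List A) {m : ℕ} (r l : Fin m → A) (u : List A) : Prop :=
  u ∈ LangX σ ∧ u ≠ [] ∧ ∃ i j : Fin m,
    (r i :: (u ++ [l j])) ∈ LangX σ ∧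
    u.head? = some (l i) ∧ u.getLast? = some (r j) ∧
    ∀ t : Fin m, ¬ ([r t, l t] <:+: u)

/-- A proper substitution. -/
def IsProper (σ : A → List A) : Prop :=
  ∃ p : ℕ, 0 < p ∧ ∀ a : A,
    (∀ b c : A, [a, b] ∈ LangX σ → [a, c] ∈ LangX σ →
      (substPow σ p b).head? = (substPow σ p c).head?) ∧
    (∀ b c : A, [b, a] ∈ LangX σ → [c, a] ∈ LangX σ →
      (substPow σ p b).getLast? = (substPow σ p c).getLast?)

/-- Membership in the set `V` of words `v₁S₁v₂S₂v₃` with `v₁,v₂,v₃ ∈ A_l`, `S₁,S₂ ∈ A_s^*`. -/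
def Vcond (σ : A → List A) : A × List A × A × List A × A → Prop
  | (v1, S1, v2, S2, v3) =>
    v1 ∈ longLetters σ ∧ v2 ∈ longLetters σ ∧ v3 ∈ longLetters σ ∧
    (∀ c ∈ S1, c ∉ longLetters σ) ∧ (∀ c ∈ S2, c ∉ longLetters σ) ∧
    (v1 :: (S1 ++ v2 :: (S2 ++ [v3]))) ∈ LangX σ

/-- The cylinder set `[v₁S₁.v₂S₂v₃]`. -/
def Vbase (σ : A → List A) : A × List A × A × List A × A → Set (ℤ → A)
  | (v1, S1, v2, S2, v3) =>
    {x | x ∈ Xsub σ ∧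
      seg x (-(1 + S1.length : ℤ)) (v1 :: (S1 ++ v2 :: (S2 ++ [v3]))).length
        = v1 :: (S1 ++ v2 :: (S2 ++ [v3]))}

/-- The height `|σ^n(v₂S₂)|` of the tower over `[v₁S₁.v₂S₂v₃]` in `Ξ_n`. -/
def Vheight (σ : A → List A) (n : ℕ) : A × List A × A × List A × A → ℕ
  | (_, _, v2, S2, _) => (substWord (substPow σ n) (v2 :: S2)).length

/-- The element `T_σ^i σ^n([v₁S₁.v₂S₂v₃])` of the Kakutani–Rokhlin partition `Ξ_n`. -/
def Vpiece (σ : A → List A) (n : ℕ) (q : A × List A × A × List A × A) (i : ℕ) :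
    Set (ℤ → A) :=
  {x | ∃ y z : ℤ → A, y ∈ Vbase σ q ∧ IsSubstImage (substPow σ n) y z ∧
    x = shiftZ (i : ℤ) z}

/-- Membership in `Λ`. -/
def MemLambda (σ : A → List A) (s : ℕ → A × A) : Prop :=
  ∀ n : ℕ, [(s n).1, (s n).2] ∈ Lang σ ∧
    (σ (s (n + 1)).1).getLast? = some (s n).1 ∧
    (σ (s (n + 1)).2).head? = some (s n).2

/-- `x = w(s̄)` for `s̄ ∈ Λ`. -/
def IsLambdaPoint (σ : A → List A) (s : ℕ → A × A) (x : ℤ → A) : Prop :=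
  ∀ n : ℕ, seg x (-((substPow σ n (s n).1).length : ℤ))
      ((substPow σ n (s n).1).length + (substPow σ n (s n).2).length)
    = substPow σ n (s n).1 ++ substPow σ n (s n).2

/-- Membership in `M`: `i₀ = 0` and `a_j` occurs at position `i_{j+1}` of `σ(a_{j+1})`. -/
def MemM (σ : A → List A) (t : ℕ → A × ℕ) : Prop :=
  (t 0).2 = 0 ∧ ∀ j : ℕ, (σ (t (j + 1)).1)[(t (j + 1)).2]? = some (t j).1

/-- The cutting points `j_n` attached to an element of `M`. -/
def jSeq (σ : A → List A) (t : ℕ → A × ℕ) : ℕ → ℕ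
  | 0 => 0
  | n + 1 =>
      jSeq σ t n + (substWord (substPow σ n) ((σ (t (n + 1)).1).take (t (n + 1)).2)).length

/-- Membership in `M₀`: `j_n → ∞` and `|σ^n(a_n)| - j_n → ∞`. -/
def MZero (σ : A → List A) (t : ℕ → A × ℕ) : Prop :=
  MemM σ t ∧ ∀ N : ℕ, ∃ n0 : ℕ, ∀ n ≥ n0,
    N ≤ jSeq σ t n ∧ jSeq σ t n + N ≤ (substPow σ n (t n).1).length

/-- `x = w(m̄)` for `m̄ ∈ M₀`. -/
def IsMPoint (σ : A → List A) (t : ℕ → A × ℕ) (x : ℤ → A) : Prop :=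
  ∀ n : ℕ, seg x (-(jSeq σ t n : ℤ)) (substPow σ n (t n).1).length = substPow σ n (t n).1
section Basic

variable {σ : A → List A} {ρ : B → List A}

theorem substWord_append (ρ : B → List A) (u v : List B) :
    substWord ρ (u ++ v) = substWord ρ u ++ substWord ρ v := by
  simp [substWord]

theorem substWord_cons (ρ : B → List A) (a : B) (t : List B) :
    substWord ρ (a :: t) = ρ a ++ substWord ρ t := by
  simp [substWord]

theorem substIter_append (σ : A → List A) (n : ℕ) (u v : List A) :
    substIter σ n (u ++ v) = substIter σ n u ++ substIter σ n v := by
  induction n generalizing u v with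
  | zero => simp [substIter]
  | succ n ih =>
      simp only [substIter, Function.iterate_succ_apply] at *
      rw [substWord_append, ih]

theorem substIter_nil (σ : A → List A) (n : ℕ) : substIter σ n [] = [] := by
  induction n with
  | zero => rfl
  | succ n ih => simp only [substIter, Function.iterate_succ_apply] at *
                 simpa [substWord] using ih

theorem substIter_eq_substWord (σ : A → List A) (n : ℕ) (w : List A) :
    substIter σ n w = substWord (substPow σ n) w := by
  induction w with
  | nil => simp [substIter_nil, substWord]
  | cons a t ih =>
      have : a :: t = [a] ++ t := rfl
      rw [this, substIter_append, substWord_append, ih]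
      simp [substWord, substPow]

theorem substPow_succ (σ : A → List A) (n : ℕ) (a : A) :
    substPow σ (n + 1) a = substWord σ (substPow σ n a) := by
  simp [substPow, substIter, Function.iterate_succ_apply']

theorem substPow_add (σ : A → List A) (n m : ℕ) (a : A) :
    substPow σ (n + m) a = substWord (substPow σ n) (substPow σ m a) := by
  rw [← substIter_eq_substWord]
  simp [substPow, substIter, Function.iterate_add_apply]

theorem substWord_ne_nil (hne : ∀ b, ρ b ≠ []) {w : List B} (hw : w ≠ []) :
    substWord ρ w ≠ [] := by
  cases w with
  | nil => exact absurd rfl hw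
  | cons a t => simp [substWord_cons]; exact fun h => (hne a h).elim

theorem substPow_ne_nil (hne : ∀ a, σ a ≠ []) (n : ℕ) (a : A) :
    substPow σ n a ≠ [] := by
  induction n with
  | zero => simp [substPow, substIter]
  | succ n ih => rw [substPow_succ]; exact substWord_ne_nil hne ih

theorem substWord_head? (hne : ∀ b, ρ b ≠ []) (a : B) (t : List B) :
    (substWord ρ (a :: t)).head? = (ρ a).head? := by
  rw [substWord_cons]
  cases h : ρ a with
  | nil => exact absurd h (hne a)
  | cons c s => simp

theorem substWord_getLast? (hne : ∀ b, ρ b ≠ []) (t : List B) (a : B) :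
    (substWord ρ (t ++ [a])).getLast? = (ρ a).getLast? := by
  rw [substWord_append]
  have h1 : substWord ρ [a] = ρ a := by simp [substWord]
  rw [h1]
  exact List.getLast?_append_of_ne_nil _ (hne a)

end Basic
section Seg

variable {σ : A → List A} {ρ : B → List A}

theorem seg_eq (x : ℤ → A) (i : ℤ) (len : ℕ) :
    seg x i len = (List.range len).map (fun k : ℕ => x (i + (k : ℤ))) := by
  unfold seg
  simp only [List.pure_def, List.bind_eq_flatMap, ← List.map_eq_flatMap, List.map_map]
  rfl

theorem seg_length (x : ℤ → A) (i : ℤ) (len : ℕ) : (seg x i len).length = len := by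
  rw [seg_eq]; simp

theorem seg_one (x : ℤ → A) (i : ℤ) : seg x i 1 = [x i] := by
  rw [seg_eq, show List.range 1 = [0] from rfl]
  simp

theorem substWord_singleton (ρ : B → List A) (a : B) : substWord ρ [a] = ρ a := by
  simp [substWord]

theorem seg_append (x : ℤ → A) (i : ℤ) (l1 l2 : ℕ) :
    seg x i (l1 + l2) = seg x i l1 ++ seg x (i + l1) l2 := by
  rw [seg_eq, seg_eq, seg_eq, List.range_add, List.map_append, List.map_map]
  congr 1
  apply List.map_congr_left
  intro k hk
  simp only [Function.comp_apply]
  congr 1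
  push_cast
  ring

theorem seg_getElem (x : ℤ → A) (i : ℤ) (len k : ℕ) (hk : k < len) :
    (seg x i len)[k]'(by rw [seg_eq]; simpa) = x (i + k) := by
  simp only [seg_eq (x := x)]
  simp

theorem seg_append_inj {x : ℤ → A} {i : ℤ} {u v : List A}
    (h : seg x i (u ++ v).length = u ++ v) :
    seg x i u.length = u ∧ seg x (i + u.length) v.length = v := by
  rw [List.length_append, seg_append] at h
  exact List.append_inj h (seg_length ..)

theorem seg_mid {x : ℤ → A} {i : ℤ} {u v t : List A}
    (h : seg x i (u ++ v ++ t).length = u ++ v ++ t) :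
    seg x (i + u.length) v.length = v := by
  rw [List.append_assoc] at h
  have h1 := (seg_append_inj h).2
  exact (seg_append_inj h1).1

theorem seg_infix (x : ℤ → A) {i i' : ℤ} {len len' : ℕ}
    (h1 : i' ≤ i) (h2 : i + len ≤ i' + len') :
    seg x i len <:+: seg x i' len' := by
  set p := (i - i').toNat with hpdef
  set q := (i' + len' - (i + len)).toNat with hqdef
  have hp : (p : ℤ) = i - i' := Int.toNat_of_nonneg (by omega)
  have hq : (q : ℤ) = i' + len' - (i + len) := Int.toNat_of_nonneg (by omega)
  have hlen : len' = p + (len + q) := by omega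
  have hip : i' + (p : ℤ) = i := by omega
  rw [hlen, seg_append, seg_append, hip]
  exact ⟨seg x i' p, seg x (i + len) q, by simp⟩

theorem lang_infix {u v : List A} (h : u <:+: v) (hv : v ∈ Lang σ) : u ∈ Lang σ := by
  obtain ⟨a, n, hn, hi⟩ := hv; exact ⟨a, n, hn, h.trans hi⟩

theorem lang_substIter {v : List A} (hv : v ∈ Lang σ) (k : ℕ) :
    substIter σ k v ∈ Lang σ := by
  obtain ⟨a, n, hn, s, t, hst⟩ := hv
  refine ⟨a, k + n, by omega, ?_⟩
  have h2 : substIter σ k (substIter σ n [a]) = substIter σ (k + n) [a] := by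
    simp [substIter, ← Function.iterate_add_apply]
  rw [← h2, ← hst, substIter_append, substIter_append]
  exact ⟨_, _, rfl⟩

theorem xsub_seg_mem {x : ℤ → A} (hx : x ∈ Xsub σ) (i : ℤ) (len : ℕ) :
    seg x i len ∈ Lang σ := by
  set n := (max (-i) (i + len)).toNat with hn
  have h1 : -i ≤ (n : ℤ) := le_trans (le_max_left _ _) (Int.self_le_toNat _)
  have h2 : i + len ≤ (n : ℤ) := le_trans (le_max_right _ _) (Int.self_le_toNat _)
  exact lang_infix
    (seg_infix x (i' := -(n:ℤ)) (len' := 2*n+1) (by omega) (by push_cast; omega)) (hx n)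

theorem blockStart_natCast (τ : B → List A) (y : ℤ → B) (k : ℕ) :
    blockStart τ y (k : ℤ) = ∑ j ∈ Finset.range k, ((τ (y (j : ℤ))).length : ℤ) := by
  rw [blockStart, if_pos (by positivity)]
  simp

theorem length_substWord_seg (τ : B → List A) (y : ℤ → B) (i : ℤ) (k : ℕ) :
    ((substWord τ (seg y i k)).length : ℤ)
      = ∑ j ∈ Finset.range k, ((τ (y (i + j))).length : ℤ) := by
  induction k with
  | zero => simp [seg_eq, substWord]
  | succ k ih =>
      rw [seg_append y i k 1, substWord_append, List.length_append, Finset.sum_range_succ]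
      push_cast
      rw [ih, seg_one, substWord_singleton]

theorem blockStart_natCast' (τ : B → List A) (y : ℤ → B) (k : ℕ) :
    blockStart τ y (k : ℤ) = ((substWord τ (seg y 0 k)).length : ℤ) := by
  rw [blockStart_natCast, length_substWord_seg]
  simp

theorem blockStart_neg (τ : B → List A) (y : ℤ → B) (k : ℕ) :
    blockStart τ y (-(k : ℤ)) = -((substWord τ (seg y (-(k : ℤ)) k)).length : ℤ) := by
  rcases Nat.eq_zero_or_pos k with hk | hk
  · subst hk; simp [blockStart, seg_eq, substWord]
  rw [blockStart, if_neg (by omega), length_substWord_seg]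
  simp only [Int.neg_neg, Int.toNat_natCast]
  rw [← Finset.sum_range_reflect (fun j => ((τ (y (-(j:ℤ) - 1))).length : ℤ)) k]
  congr 1
  apply Finset.sum_congr rfl
  intro j hj
  simp only [Finset.mem_range] at hj
  have harg : -((k - 1 - j : ℕ) : ℤ) - 1 = -(k:ℤ) + j := by omega
  rw [harg]

theorem seg_block (ρ : B → List A) {x : ℤ → A} {i : ℤ} {w : List B}
    (h : seg x i (substWord ρ w).length = substWord ρ w) {k : ℕ} (hk : k < w.length) :
    seg x (i + ((substWord ρ (w.take k)).length : ℤ)) (ρ w[k]).length = ρ w[k] := by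
  have hw : w = w.take k ++ [w[k]] ++ w.drop (k + 1) := by
    rw [List.append_assoc, List.singleton_append, ← List.drop_eq_getElem_cons hk,
      List.take_append_drop]
  rw [hw] at h
  rw [substWord_append, substWord_append, substWord_singleton] at h
  exact seg_mid h

end Seg
section Data

variable {σ : A → List A}

theorem substWord_pair (ρ : B → List A) (a b : B) :
    substWord ρ [a, b] = ρ a ++ ρ b := by
  simp [substWord]

theorem substPow_one (σ : A → List A) (a : A) : substPow σ 1 a = σ a := by
  simp [substPow, substIter, substWord]

theorem substPow_succ' (σ : A → List A) (m : ℕ) (a : A) :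
    substPow σ (m + 1) a = substWord (substPow σ m) (σ a) := by
  rw [substPow_add σ m 1 a, substPow_one]

theorem eq_cons_of_head? {l : List A} {a : A} (h : l.head? = some a) :
    l = a :: l.tail := by
  cases l <;> simp_all

theorem eq_append_of_getLast? {l : List A} {a : A} (h : l.getLast? = some a) :
    l = l.dropLast ++ [a] := by
  have hl : l ≠ [] := by rintro rfl; simp at h
  have h2 := List.getLast?_eq_getLast hl
  rw [h] at h2
  injection h2 with h2
  conv_lhs => rw [← List.dropLast_append_getLast hl]
  rw [h2]

theorem seg_two (x : ℤ → A) (i : ℤ) : seg x i 2 = [x i, x (i + 1)] := by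
  rw [seg_eq, show List.range 2 = [0, 1] from rfl]
  norm_num

theorem getLast_head_infix {u v : List A} (hu : u ≠ []) (hv : v ≠ []) :
    [u.getLast hu, v.head hv] <:+: u ++ v := by
  refine ⟨u.dropLast, v.tail, ?_⟩
  calc u.dropLast ++ [u.getLast hu, v.head hv] ++ v.tail
      = (u.dropLast ++ [u.getLast hu]) ++ (v.head hv :: v.tail) := by simp
    _ = u ++ v := by
        rw [List.dropLast_append_getLast hu, List.cons_head_tail]

theorem compat_last (hne : ∀ a, σ a ≠ []) (m : ℕ) (a : A) :
    (σ ((substPow σ m a).getLast (substPow_ne_nil hne m a))).getLast?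
      = some ((substPow σ (m + 1) a).getLast (substPow_ne_nil hne (m + 1) a)) := by
  rw [← List.getLast?_eq_getLast, substPow_succ]
  conv_rhs => rw [← List.dropLast_append_getLast (substPow_ne_nil hne m a)]
  exact (substWord_getLast? hne _ _).symm

theorem compat_head (hne : ∀ a, σ a ≠ []) (m : ℕ) (a : A) :
    (σ ((substPow σ m a).head (substPow_ne_nil hne m a))).head?
      = some ((substPow σ (m + 1) a).head (substPow_ne_nil hne (m + 1) a)) := by
  rw [← List.head?_eq_head, substPow_succ]
  conv_rhs => rw [← List.cons_head_tail (substPow_ne_nil hne m a)]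
  exact (substWord_head? hne _ _).symm

theorem blockStart_zero (τ : B → List A) (y : ℤ → B) : blockStart τ y 0 = 0 := by
  simp [blockStart]

theorem blockStart_negOne (τ : B → List A) (y : ℤ → B) :
    blockStart τ y (-1) = -((τ (y (-1))).length : ℤ) := by
  rw [blockStart, if_neg (by omega)]
  norm_num [Finset.sum_range_one]

theorem level_data (σ : A → List A) (hne : ∀ a, σ a ≠ []) {x y : ℤ → A} {N n : ℕ}
    (hy : y ∈ Xsub σ) (him : IsSubstImage (substPow σ N) y x) (hnN : n ≤ N)
    (an bn : A)
    (han : an = (substPow σ (N - n) (y (-1))).getLast (substPow_ne_nil hne _ _))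
    (hbn : bn = (substPow σ (N - n) (y 0)).head (substPow_ne_nil hne _ _)) :
    [an, bn] ∈ Lang σ ∧
      seg x (-((substPow σ n an).length : ℤ))
        ((substPow σ n an).length + (substPow σ n bn).length)
        = substPow σ n an ++ substPow σ n bn := by
  set m := N - n with hm
  have hN : N = n + m := by omega
  have hpair : [y (-1), y 0] ∈ Lang σ := by
    have h := xsub_seg_mem hy (-1) 2
    rw [seg_two] at h
    norm_num at h
    exact h
  constructor
  · have h1 := lang_substIter hpair m
    rw [substIter_eq_substWord, substWord_pair] at h1
    refine lang_infix ?_ h1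
    rw [han, hbn]
    exact getLast_head_infix _ _
  · have hb0 := him 0
    rw [blockStart_zero] at hb0
    have hbm := him (-1)
    rw [blockStart_negOne] at hbm
    have hsplit_a : substPow σ N (y (-1))
        = substWord (substPow σ n) ((substPow σ m (y (-1))).dropLast)
          ++ substPow σ n an := by
      rw [hN, substPow_add]
      conv_lhs =>
        rw [← List.dropLast_append_getLast (substPow_ne_nil hne m (y (-1)))]
      rw [substWord_append, substWord_singleton, han]
    have hsplit_b : substPow σ N (y 0)
        = substPow σ n bn ++ substWord (substPow σ n) ((substPow σ m (y 0)).tail) := by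
      rw [hN, substPow_add]
      conv_lhs => rw [← List.cons_head_tail (substPow_ne_nil hne m (y 0))]
      rw [substWord_cons, hbn]
    rw [hsplit_b] at hb0
    have hB := (seg_append_inj hb0).1
    rw [hsplit_a] at hbm
    have hA := (seg_append_inj hbm).2
    have harg : (-(((substWord (substPow σ n) ((substPow σ m (y (-1))).dropLast)
          ++ substPow σ n an).length : ℤ))
        + ((substWord (substPow σ n) ((substPow σ m (y (-1))).dropLast)).length : ℤ))
        = -((substPow σ n an).length : ℤ) := by
      rw [List.length_append]; push_cast; ring
    rw [harg] at hA
    rw [seg_append, hA,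
      show (-(((substPow σ n an).length : ℤ)) + ((substPow σ n an).length : ℤ)) = 0 by ring,
      hB]

end Data
section SubsetDir

variable {σ : A → List A}

theorem compat_last2 (hne : ∀ a, σ a ≠ []) (m k : ℕ) (hk : k = m + 1) (a : A) :
    (σ ((substPow σ m a).getLast (substPow_ne_nil hne _ _))).getLast?
      = some ((substPow σ k a).getLast (substPow_ne_nil hne _ _)) := by
  subst hk; exact compat_last hne m a

theorem compat_head2 (hne : ∀ a, σ a ≠ []) (m k : ℕ) (hk : k = m + 1) (a : A) :
    (σ ((substPow σ m a).head (substPow_ne_nil hne _ _))).head?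
      = some ((substPow σ k a).head (substPow_ne_nil hne _ _)) := by
  subst hk; exact compat_head hne m a

theorem subset_dir [Fintype A] (σ : A → List A) (hne : ∀ a, σ a ≠ [])
    {x : ℤ → A} (hx : ∀ N : ℕ, ∃ y ∈ Xsub σ, IsSubstImage (substPow σ N) y x) :
    ∃ s : ℕ → A × A, MemLambda σ s ∧ IsLambdaPoint σ s x := by
  classical
  choose y hyX hyI using hx
  set c : ℕ → ℕ → A × A := fun N k =>
    ((substPow σ (N - k) (y N (-1))).getLast (substPow_ne_nil hne _ _),
     (substPow σ (N - k) (y N 0)).head (substPow_ne_nil hne _ _)) with hc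
  let U : Ultrafilter ℕ := Ultrafilter.of Filter.atTop
  have hU : (U : Filter ℕ) ≤ Filter.atTop := Ultrafilter.of_le _
  have hval : ∀ k : ℕ, ∃ v : A × A, {N | c N k = v} ∈ U := by
    intro k
    have h1 : (⋃ v ∈ (Set.univ : Set (A × A)), {N | c N k = v}) = Set.univ := by
      ext N; simp
    have h2 : (⋃ v ∈ (Set.univ : Set (A × A)), {N | c N k = v}) ∈ U := by
      rw [h1]; exact Filter.univ_mem
    obtain ⟨v, _, hv⟩ := (Ultrafilter.finite_biUnion_mem_iff Set.finite_univ).mp h2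
    exact ⟨v, hv⟩
  choose s hsmem using hval
  refine ⟨s, ?_, ?_⟩
  · intro n
    have hmem : ({N | c N n = s n} ∩ ({N | c N (n+1) = s (n+1)} ∩ {N | n + 1 ≤ N})) ∈ U :=
      Filter.inter_mem (hsmem n)
        (Filter.inter_mem (hsmem (n+1)) (hU (Filter.mem_atTop (n+1))))
    obtain ⟨N, hN1, hN2, hN3⟩ := nonempty_of_mem hmem
    simp only [Set.mem_setOf_eq] at hN1 hN2 hN3
    refine ⟨?_, ?_, ?_⟩
    · rw [← hN1]
      exact (level_data σ hne (hyX N) (hyI N) (by omega) _ _ rfl rfl).1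
    · rw [← hN1, ← hN2]
      exact compat_last2 hne (N - (n+1)) (N - n) (by omega) _
    · rw [← hN1, ← hN2]
      exact compat_head2 hne (N - (n+1)) (N - n) (by omega) _
  · intro n
    have hmem : ({N | c N n = s n} ∩ {N | n ≤ N}) ∈ U :=
      Filter.inter_mem (hsmem n) (hU (Filter.mem_atTop n))
    obtain ⟨N, hN1, hN3⟩ := nonempty_of_mem hmem
    simp only [Set.mem_setOf_eq] at hN1 hN3
    rw [← hN1]
    exact (level_data σ hne (hyX N) (hyI N) hN3 _ _ rfl rfl).2

end SubsetDir
section Chains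

variable {σ : A → List A}

theorem prefix_chain (hne : ∀ a, σ a ≠ []) {c : ℕ → A}
    (hc : ∀ m, (σ (c (m+1))).head? = some (c m)) {m m' : ℕ} (h : m ≤ m') :
    substPow σ m (c m) <+: substPow σ m' (c m') := by
  induction m', h using Nat.le_induction with
  | base => exact List.prefix_rfl
  | succ m' hm ih =>
      refine ih.trans ?_
      rw [substPow_succ', eq_cons_of_head? (hc m'), substWord_cons]
      exact List.prefix_append _ _

theorem suffix_chain (hne : ∀ a, σ a ≠ []) {c : ℕ → A}
    (hc : ∀ m, (σ (c (m+1))).getLast? = some (c m)) {m m' : ℕ} (h : m ≤ m') :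
    substPow σ m (c m) <:+ substPow σ m' (c m') := by
  induction m', h using Nat.le_induction with
  | base => exact List.suffix_rfl
  | succ m' hm ih =>
      refine ih.trans ?_
      rw [substPow_succ', eq_append_of_getLast? (hc m'), substWord_append,
        substWord_singleton]
      exact List.suffix_append _ _

theorem suffix_getElem_sub {u v : List A} (h : u <:+ v) {t : ℕ}
    (h1 : 1 ≤ t) (ht : t ≤ u.length) :
    u[u.length - t]'(by omega) = v[v.length - t]'(by have := h.length_le; omega) := by
  obtain ⟨w, rfl⟩ := h
  have e : (w ++ u).length - t = w.length + (u.length - t) := by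
    rw [List.length_append]; omega
  simp only [e]
  rw [List.getElem_append_right (Nat.le_add_right _ _)]
  simp

theorem exists_limit_point (σ : A → List A) (hne : ∀ a, σ a ≠ [])
    {ca cb : ℕ → A}
    (hcb : ∀ m, (σ (cb (m+1))).head? = some (cb m))
    (hca : ∀ m, (σ (ca (m+1))).getLast? = some (ca m))
    (hbig : ∀ K : ℕ, ∃ m, K ≤ (substPow σ m (ca m)).length
      ∧ K ≤ (substPow σ m (cb m)).length) :
    ∃ y : ℤ → A,
      (∀ m k, k ≤ (substPow σ m (cb m)).length →
        seg y 0 k = (substPow σ m (cb m)).take k) ∧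
      (∀ m k, k ≤ (substPow σ m (ca m)).length →
        seg y (-(k:ℤ)) k
          = (substPow σ m (ca m)).drop ((substPow σ m (ca m)).length - k)) := by
  classical
  have hAinh : Inhabited A := ⟨ca 0⟩
  choose M hM1 hM2 using hbig
  set y : ℤ → A := fun k =>
    if 0 ≤ k then
      (substPow σ (M (k.toNat + 1)) (cb (M (k.toNat + 1)))).getD k.toNat default
    else
      (substPow σ (M (-k).toNat) (ca (M (-k).toNat))).getD
        ((substPow σ (M (-k).toNat) (ca (M (-k).toNat))).length - (-k).toNat) default
    with hy
  have hy_pos : ∀ (m j : ℕ) (hj : j < (substPow σ m (cb m)).length),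
      y (j : ℤ) = (substPow σ m (cb m))[j] := by
    intro m j hj
    have h0 : (0:ℤ) ≤ (j:ℤ) := by positivity
    have htn : ((j:ℤ)).toNat = j := Int.toNat_natCast j
    rw [hy]
    simp only [h0, if_pos, htn]
    set m0 := M (j + 1) with hm0
    have hj0 : j < (substPow σ m0 (cb m0)).length := hM2 (j+1)
    rw [List.getD_eq_getElem _ _ hj0]
    have hp1 : substPow σ m (cb m) <+: substPow σ (max m m0) (cb (max m m0)) :=
      prefix_chain hne hcb (le_max_left _ _)
    have hp2 : substPow σ m0 (cb m0) <+: substPow σ (max m m0) (cb (max m m0)) :=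
      prefix_chain hne hcb (le_max_right _ _)
    rw [hp2.getElem hj0, hp1.getElem hj]
  have hy_neg : ∀ (m t : ℕ) (ht1 : 1 ≤ t) (ht : t ≤ (substPow σ m (ca m)).length),
      y (-(t : ℤ)) = (substPow σ m (ca m))[(substPow σ m (ca m)).length - t]'(by omega) := by
    intro m t ht1 ht
    have h0 : ¬ (0:ℤ) ≤ -(t:ℤ) := by omega
    have htn : (-(-(t:ℤ))).toNat = t := by omega
    rw [hy]
    simp only [h0, if_neg, htn, if_false]
    set m0 := M t with hm0
    have ht0 : t ≤ (substPow σ m0 (ca m0)).length := hM1 t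
    rw [List.getD_eq_getElem _ _ (by omega)]
    have hs1 : substPow σ m (ca m) <:+ substPow σ (max m m0) (ca (max m m0)) :=
      suffix_chain hne hca (le_max_left _ _)
    have hs2 : substPow σ m0 (ca m0) <:+ substPow σ (max m m0) (ca (max m m0)) :=
      suffix_chain hne hca (le_max_right _ _)
    rw [suffix_getElem_sub hs2 ht1 ht0, suffix_getElem_sub hs1 ht1 ht]
  refine ⟨y, ?_, ?_⟩
  · intro m k hk
    apply List.ext_getElem
    · rw [seg_length, List.length_take]; omega
    intro j hj1 hj2
    rw [seg_length] at hj1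
    rw [List.length_take] at hj2
    rw [seg_getElem y 0 k j hj1, List.getElem_take, zero_add]
    exact hy_pos m j (by omega)
  · intro m k hk
    apply List.ext_getElem
    · rw [seg_length, List.length_drop]; omega
    intro j hj1 hj2
    rw [seg_length] at hj1
    rw [seg_getElem y (-(k:ℤ)) k j hj1, List.getElem_drop]
    have e : -(k:ℤ) + j = -(((k - j : ℕ) : ℤ)) := by omega
    rw [e, hy_neg m (k - j) (by omega) (by omega)]
    congr 1
    omega

end Chains
section SupsetDir

theorem lambda_point_mem [Fintype A] (σ : A → List A) (hne : ∀ a, σ a ≠ [])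
    (hlen : ∀ a : A, Filter.Tendsto (fun k => (substPow σ k a).length)
      Filter.atTop Filter.atTop)
    {s : ℕ → A × A} (hs : MemLambda σ s) {x : ℤ → A} (hx : IsLambdaPoint σ s x)
    (n : ℕ) : ∃ y ∈ Xsub σ, IsSubstImage (substPow σ n) y x := by
  classical
  have huni : ∀ K : ℕ, ∃ m, ∀ a : A, K ≤ (substPow σ m a).length := fun K =>
    (eventually_all.mpr fun a => (hlen a).eventually_ge_atTop K).exists
  have hcaS : ∀ m, (σ ((s (n + (m+1))).1)).getLast? = some ((s (n + m)).1) :=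
    fun m => (hs (n + m)).2.1
  have hcbS : ∀ m, (σ ((s (n + (m+1))).2)).head? = some ((s (n + m)).2) :=
    fun m => (hs (n + m)).2.2
  have hbig : ∀ K : ℕ, ∃ m, K ≤ (substPow σ m ((s (n + m)).1)).length
      ∧ K ≤ (substPow σ m ((s (n + m)).2)).length := by
    intro K; obtain ⟨m, hm⟩ := huni K; exact ⟨m, hm _, hm _⟩
  obtain ⟨y, hC1, hC2⟩ := exists_limit_point σ hne
    (ca := fun m => (s (n + m)).1) (cb := fun m => (s (n + m)).2) hcbS hcaS hbig
  have hyX : y ∈ Xsub σ := by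
    intro n'
    obtain ⟨m, hm1, hm2⟩ := hbig (n' + 1)
    have hsplit : seg y (-(n':ℤ)) (2 * n' + 1)
        = (substPow σ m ((s (n + m)).1)).drop ((substPow σ m ((s (n + m)).1)).length - n')
          ++ (substPow σ m ((s (n + m)).2)).take (n' + 1) := by
      rw [show 2 * n' + 1 = n' + (n' + 1) from by ring, seg_append,
        show -(n':ℤ) + n' = 0 from by ring, hC1 m _ (by omega), hC2 m _ (by omega)]
    rw [hsplit]
    have hQP : substPow σ m ((s (n + m)).1) ++ substPow σ m ((s (n + m)).2) ∈ Lang σ := by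
      have h1 := lang_substIter (hs (n + m)).1 m
      rwa [substIter_eq_substWord, substWord_pair] at h1
    refine lang_infix
      ⟨(substPow σ m ((s (n + m)).1)).take ((substPow σ m ((s (n + m)).1)).length - n'),
       (substPow σ m ((s (n + m)).2)).drop (n' + 1), ?_⟩ hQP
    simp only [List.append_assoc]
    rw [List.take_append_drop]
    rw [← List.append_assoc, List.take_append_drop]
  refine ⟨y, hyX, ?_⟩
  intro K
  cases K with
  | ofNat k =>
      rw [show (Int.ofNat k) = (k:ℤ) from rfl]
      obtain ⟨m, hm1, hm2⟩ := hbig (k + 1)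
      have hxm := hx (n + m)
      rw [seg_append] at hxm
      obtain ⟨hxA, hxB⟩ := List.append_inj hxm (by rw [seg_length])
      rw [show -(((substPow σ (n + m) ((s (n + m)).1)).length : ℕ):ℤ)
          + ((substPow σ (n + m) ((s (n + m)).1)).length : ℕ) = 0 from by ring] at hxB
      have hxB2 : seg x 0 (substWord (substPow σ n) (substPow σ m ((s (n + m)).2))).length
          = substWord (substPow σ n) (substPow σ m ((s (n + m)).2)) := by
        rw [← substPow_add]; exact hxB
      have hblk := seg_block (substPow σ n) hxB2 (k := k) (by omega)
      have hyk : y (k:ℤ) = (substPow σ m ((s (n + m)).2))[k]'(by omega) := by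
        have h := hC1 m (k+1) (by omega)
        have h3 := List.getElem_of_eq h (i := k) (by rw [seg_length]; omega)
        rw [seg_getElem y 0 (k+1) k (by omega), zero_add, List.getElem_take] at h3
        exact h3
      have hbs : blockStart (substPow σ n) y (k:ℤ)
          = ((substWord (substPow σ n) ((substPow σ m ((s (n + m)).2)).take k)).length : ℤ) := by
        rw [blockStart_natCast', hC1 m k (by omega)]
      rw [hyk, hbs]
      rw [zero_add] at hblk
      exact hblk
  | negSucc k =>
      rw [show (Int.negSucc k) = -(((k+1 : ℕ)):ℤ) from by
        rw [Int.negSucc_eq]; push_cast; ring]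
      obtain ⟨m, hm1, hm2⟩ := hbig (k + 2)
      have hxm := hx (n + m)
      rw [seg_append] at hxm
      obtain ⟨hxA, hxB⟩ := List.append_inj hxm (by rw [seg_length])
      have hxA2 : seg x (-((substWord (substPow σ n) (substPow σ m ((s (n + m)).1))).length : ℤ))
          (substWord (substPow σ n) (substPow σ m ((s (n + m)).1))).length
          = substWord (substPow σ n) (substPow σ m ((s (n + m)).1)) := by
        rw [← substPow_add]; exact hxA
      have hidx : (substPow σ m ((s (n + m)).1)).length - (k+1)
          < (substPow σ m ((s (n + m)).1)).length := by omega
      have hblk := seg_block (substPow σ n) hxA2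
        (k := (substPow σ m ((s (n + m)).1)).length - (k+1)) hidx
      have hyk : y (-((k+1:ℕ):ℤ))
          = (substPow σ m ((s (n + m)).1))[(substPow σ m ((s (n + m)).1)).length - (k+1)]'hidx := by
        have h := hC2 m (k+1) (by omega)
        have h3 := List.getElem_of_eq h (i := 0) (by rw [seg_length]; omega)
        rw [seg_getElem y (-((k+1:ℕ):ℤ)) (k+1) 0 (by omega), List.getElem_drop] at h3
        simpa using h3
      have hbs : blockStart (substPow σ n) y (-((k+1:ℕ):ℤ))
          = -(((substWord (substPow σ n)
              ((substPow σ m ((s (n + m)).1)).drop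
                ((substPow σ m ((s (n + m)).1)).length - (k+1)))).length : ℤ)) := by
        rw [blockStart_neg, hC2 m (k+1) (by omega)]
      have h4 : (substWord (substPow σ n)
            ((substPow σ m ((s (n + m)).1)).take
              ((substPow σ m ((s (n + m)).1)).length - (k+1)))).length
          + (substWord (substPow σ n)
            ((substPow σ m ((s (n + m)).1)).drop
              ((substPow σ m ((s (n + m)).1)).length - (k+1)))).length
          = (substWord (substPow σ n) (substPow σ m ((s (n + m)).1))).length := by
        rw [← List.length_append, ← substWord_append, List.take_append_drop]
      have hpos : -((substWord (substPow σ n) (substPow σ m ((s (n + m)).1))).length : ℤ)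
          + ((substWord (substPow σ n)
            ((substPow σ m ((s (n + m)).1)).take
              ((substPow σ m ((s (n + m)).1)).length - (k+1)))).length : ℤ)
          = -(((substWord (substPow σ n)
            ((substPow σ m ((s (n + m)).1)).drop
              ((substPow σ m ((s (n + m)).1)).length - (k+1)))).length : ℤ)) := by
        omega
      rw [hyk, hbs]
      rw [hpos] at hblk
      exact hblk

end SupsetDir

/-- For an aperiodic substitution with `|σ^n(a)| → ∞` for every
letter `a`, `⋂_{n≥0} σ^n(X_σ) = {w(s̄) : s̄ ∈ Λ}`. -/
theorem intersection_of_images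
    {A : Type*} [Fintype A] (σ : A → List A) (hne : ∀ a, σ a ≠ [])
    (hunc : ¬ (Xsub σ).Countable) (hap : Aperiodic σ)
    (hlen : ∀ a : A, Filter.Tendsto (fun n => (substPow σ n a).length)
      Filter.atTop Filter.atTop) :
    (⋂ n : ℕ, {z : ℤ → A | ∃ y ∈ Xsub σ, IsSubstImage (substPow σ n) y z}) =
      {x : ℤ → A | ∃ s : ℕ → A × A, MemLambda σ s ∧ IsLambdaPoint σ s x} := by
  ext x
  simp only [Set.mem_iInter, Set.mem_setOf_eq]
  constructor
  · intro hx
    exact subset_dir σ hne hx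
  · rintro ⟨s, hs, hxl⟩ n
    exact lambda_point_mem σ hne hlen hs hxl n

end PaperStmt
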